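/- Let Q, R, Y be symmetric positive definite and suppose S is symmetric positive definite. Then the condition S ≤ (A S⁻¹ Aᵀ + Q)⁻¹ + Cᵀ(R + Y⁻¹)⁻¹C holds if and only if the 2×2 block matrix [[Q⁻¹ + Cᵀ(R+Y⁻¹)⁻¹C − S, Q⁻¹A],[AᵀQ⁻¹, AᵀQ⁻¹A + S]] is positive semidefinite. -/

import Mathlib

open Matrix

theorem lmi_equivalence
    (n s : ℕ) (hn : 0 < n) (hs : 0 < s)
    (A : Matrix (Fin n) (Fin n) ℝ) (C : Matrix (Fin s) (Fin n) ℝ)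
    (Q : Matrix (Fin n) (Fin n) ℝ) (R Y : Matrix (Fin s) (Fin s) ℝ)
    (hQ : Q.PosDef) (hR : R.PosDef) (hY : Y.PosDef)
    (S : Matrix (Fin n) (Fin n) ℝ) (hS : S.PosDef) :
    ((A * S⁻¹ * Aᵀ + Q)⁻¹ + Cᵀ * (R + Y⁻¹)⁻¹ * C - S).PosSemidef ↔
      (fromBlocks (Q⁻¹ + Cᵀ * (R + Y⁻¹)⁻¹ * C - S) (Q⁻¹ * A)
        (Aᵀ * Q⁻¹) (Aᵀ * Q⁻¹ * A + S)).PosSemidef := by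
  have hQinv : (Q⁻¹).PosDef := hQ.inv
  have hAQA : (Aᵀ * Q⁻¹ * A).PosSemidef := by
    simpa using hQinv.posSemidef.conjTranspose_mul_mul_same A
  have hD : (Aᵀ * Q⁻¹ * A + S).PosDef := Matrix.PosDef.posSemidef_add hAQA hS
  have hD' : (S + Aᵀ * Q⁻¹ * A).PosDef := by
    rw [add_comm]; exact hD
  haveI : Invertible (Aᵀ * Q⁻¹ * A + S) := hD.isUnit.invertible
  -- Woodbury
  have hW : (A * S⁻¹ * Aᵀ + Q)⁻¹
      = Q⁻¹ - Q⁻¹ * A * (Aᵀ * Q⁻¹ * A + S)⁻¹ * Aᵀ * Q⁻¹ := by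
    have := Matrix.add_mul_mul_inv_eq_sub Q A S⁻¹ Aᵀ hQ.isUnit hS.inv.isUnit
      (by rw [Matrix.nonsing_inv_nonsing_inv S (Matrix.isUnit_iff_isUnit_det S |>.mp hS.isUnit)]; exact hD'.isUnit)
    rw [Matrix.nonsing_inv_nonsing_inv S (Matrix.isUnit_iff_isUnit_det S |>.mp hS.isUnit)] at this
    rw [add_comm (A * S⁻¹ * Aᵀ) Q, this, add_comm S]
  have hBH : (Q⁻¹ * A)ᴴ = Aᵀ * Q⁻¹ := by
    rw [conjTranspose_mul, hQinv.isHermitian.eq]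
    simp
  have key := Matrix.PosDef.fromBlocks₂₂ (Q⁻¹ + Cᵀ * (R + Y⁻¹)⁻¹ * C - S)
    (Q⁻¹ * A) hD
  rw [hBH] at key
  rw [key, hW]
  have heq : Q⁻¹ - Q⁻¹ * A * (Aᵀ * Q⁻¹ * A + S)⁻¹ * Aᵀ * Q⁻¹ + Cᵀ * (R + Y⁻¹)⁻¹ * C - S
      = Q⁻¹ + Cᵀ * (R + Y⁻¹)⁻¹ * C - S - Q⁻¹ * A * (Aᵀ * Q⁻¹ * A + S)⁻¹ * (Aᵀ * Q⁻¹) := by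
    rw [← Matrix.mul_assoc]
    abel
  rw [heq]
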